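/- arXiv:1602.01592 — 3 statements merged into one kernel-verified Lean document; each statement's English description precedes it below -/
import Mathlib

section
/- Let k be a commutative ring and let M be an m×ℓ matrix with entries in k. Suppose there exists μ ∈ k with μ ≠ 0 such that μ·δ = 0 for every maximal minor δ of M, i.e. for the determinant of every s×s submatrix of M with s = min(m,ℓ), obtained by a (strictly increasing, equivalently injective) choice of s row indices and s column indices. Then M has a non-zero kernel: there exists a vector v ∈ k^ℓ with v ≠ 0 and M·v = 0. -/
/-- Auxiliary: if `μ` kills all `n×n` minors given by strictly monotone index maps,
it kills all minors given by injective index maps. -/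
private lemma aux_inj_minor {k : Type*} [CommRing k] {m ℓ n : ℕ}
    (M : Matrix (Fin m) (Fin ℓ) k) (μ : k)
    (H : ∀ (f : Fin n → Fin m) (g : Fin n → Fin ℓ),
        StrictMono f → StrictMono g → μ * (M.submatrix f g).det = 0)
    (f : Fin n → Fin m) (g : Fin n → Fin ℓ)
    (hf : Function.Injective f) (hg : Function.Injective g) :
    μ * (M.submatrix f g).det = 0 := by
  set σ := Tuple.sort f with hσ
  set τ := Tuple.sort g with hτ
  have hfs : StrictMono (f ∘ σ) :=
    (Tuple.monotone_sort f).strictMono_of_injective (hf.comp σ.injective)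
  have hgs : StrictMono (g ∘ τ) :=
    (Tuple.monotone_sort g).strictMono_of_injective (hg.comp τ.injective)
  have key : M.submatrix f g =
      ((M.submatrix (f ∘ σ) (g ∘ τ)).submatrix (σ.symm : Equiv.Perm (Fin n)) id).submatrix
        id (τ.symm : Equiv.Perm (Fin n)) := by
    ext i j
    simp [Matrix.submatrix_apply]
  have hd := H (f ∘ σ) (g ∘ τ) hfs hgs
  rw [key, Matrix.det_permute', Matrix.det_permute]
  linear_combination (((Equiv.Perm.sign τ.symm : ℤ) : k) * ((Equiv.Perm.sign σ.symm : ℤ) : k)) * hd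

/-- Lemma `zerodivdet`: if a nonzero scalar `μ` annihilates every maximal minor
(the determinant of every `s × s` submatrix with `s = min m ℓ`, given by strictly
increasing choices of row and column indices) of an `m × ℓ` matrix `M` over a
commutative ring, then `M` has a non-zero kernel. -/
theorem matrix_nonzero_kernel_of_mu_annihilates_maximal_minors
    {k : Type*} [CommRing k] {m ℓ : ℕ} (M : Matrix (Fin m) (Fin ℓ) k)
    (h : ∃ μ : k, μ ≠ 0 ∧
      ∀ (f : Fin (min m ℓ) → Fin m) (g : Fin (min m ℓ) → Fin ℓ),
        StrictMono f → StrictMono g → μ * (M.submatrix f g).det = 0) :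
    ∃ v : Fin ℓ → k, v ≠ 0 ∧ M.mulVec v = 0 := by
  classical
  obtain ⟨μ, hμ0, hmax⟩ := h
  -- the property of size n: μ kills all injective n×n minors
  have hex : ∃ n : ℕ, ∀ (f : Fin n → Fin m) (g : Fin n → Fin ℓ),
      Function.Injective f → Function.Injective g → μ * (M.submatrix f g).det = 0 :=
    ⟨min m ℓ, fun f g hf hg => aux_inj_minor M μ hmax f g hf hg⟩
  set t := Nat.find hex with ht
  have hPt := Nat.find_spec hex
  have ht_le : t ≤ min m ℓ := Nat.find_le (fun f g hf hg => aux_inj_minor M μ hmax f g hf hg)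
  have ht_pos : t ≠ 0 := by
    intro h0
    have hP0 := hPt
    rw [← ht, h0] at hP0
    have := hP0 (Fin.elim0) (Fin.elim0) (fun a => a.elim0) (fun a => a.elim0)
    rw [Matrix.det_fin_zero, mul_one] at this
    exact hμ0 this
  obtain ⟨r, hrt⟩ := Nat.exists_eq_succ_of_ne_zero ht_pos
  have hnotPr : ¬ (∀ (f : Fin r → Fin m) (g : Fin r → Fin ℓ),
      Function.Injective f → Function.Injective g → μ * (M.submatrix f g).det = 0) :=
    Nat.find_min hex (by omega)
  push_neg at hnotPr
  obtain ⟨f, g, hf, hg, hδ⟩ := hnotPr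
  have hrℓ : r < ℓ := by omega
  -- pick a fresh column
  have hj : ∃ j₀ : Fin ℓ, j₀ ∉ Set.range g := by
    by_contra hcon
    push_neg at hcon
    have hsub : (Finset.univ : Finset (Fin ℓ)) ⊆ Finset.univ.image g := by
      intro j _
      obtain ⟨u, hu⟩ := hcon j
      exact Finset.mem_image.mpr ⟨u, Finset.mem_univ u, hu⟩
    have h1 := Finset.card_le_card hsub
    have h2 := Finset.card_image_le (s := (Finset.univ : Finset (Fin r))) (f := g)
    simp at h1 h2
    omega
  obtain ⟨j₀, hj₀⟩ := hj
  set g' : Fin (r + 1) → Fin ℓ := Fin.cons j₀ g with hg'def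
  have hg' : Function.Injective g' := Fin.cons_injective_iff.mpr ⟨hj₀, hg⟩
  set w : Fin (r + 1) → k :=
    fun u => (-1 : k) ^ (u : ℕ) * (M.submatrix f (g' ∘ u.succAbove)).det with hwdef
  set v : Fin ℓ → k := fun j => μ * ∑ u : Fin (r + 1), if g' u = j then w u else 0 with hvdef
  have hv : ∀ u, v (g' u) = μ * w u := by
    intro u
    simp only [hvdef]
    congr 1
    simp [hg'.eq_iff, Finset.sum_ite_eq']
  have hw0 : w 0 = (M.submatrix f g).det := by
    have hcomp : g' ∘ (0 : Fin (r + 1)).succAbove = g := by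
      funext u
      simp [hg'def, Fin.succAbove_zero]
    simp only [hwdef, hcomp]
    simp
  refine ⟨v, ?_, ?_⟩
  · intro h0
    apply hδ
    have := congrFun h0 (g' 0)
    rw [hv 0, hw0] at this
    simpa using this
  · -- M.mulVec v = 0
    funext i
    have expand : (M.submatrix (Fin.cons i f) g').det = ∑ u : Fin (r + 1), M i (g' u) * w u := by
      rw [Matrix.det_succ_row_zero]
      apply Finset.sum_congr rfl
      intro u _
      have h1 : (M.submatrix (Fin.cons i f) g') 0 u = M i (g' u) := by
        simp [Matrix.submatrix_apply]
      have h2 : (M.submatrix (Fin.cons i f) g').submatrix Fin.succ u.succAbove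
          = M.submatrix f (g' ∘ u.succAbove) := by
        ext a b
        simp [Matrix.submatrix_apply]
      rw [h1, h2]
      simp only [hwdef]
      ring
    have hMv : M.mulVec v i = μ * (M.submatrix (Fin.cons i f) g').det := by
      rw [expand, Finset.mul_sum]
      simp only [Matrix.mulVec, dotProduct]
      have hterm : ∀ j, M i j * v j
          = ∑ u : Fin (r + 1), if g' u = j then μ * (M i (g' u) * w u) else 0 := by
        intro j
        simp only [hvdef, Finset.mul_sum, mul_ite, mul_zero]
        apply Finset.sum_congr rfl
        intro u _
        split_ifs with hc
        · rw [← hc]; ring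
        · rfl
      simp only [hterm]
      rw [Finset.sum_comm]
      apply Finset.sum_congr rfl
      intro u _
      rw [Finset.sum_ite_eq]
      simp
    rw [hMv]
    by_cases hi : ∃ u, f u = i
    · obtain ⟨u, hu⟩ := hi
      have hrow : (M.submatrix (Fin.cons i f) g') 0 = (M.submatrix (Fin.cons i f) g') u.succ := by
        funext b
        simp [Matrix.submatrix_apply, hu]
      rw [Matrix.det_zero_of_row_eq (Fin.succ_ne_zero u).symm hrow, mul_zero]
      rfl
    · push_neg at hi
      have hcf : Function.Injective (Fin.cons i f : Fin (r + 1) → Fin m) :=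
        Fin.cons_injective_iff.mpr ⟨fun ⟨u, hu⟩ => hi u hu, hf⟩
      rw [← ht, hrt] at hPt
      have h0 := hPt (Fin.cons i f) g' hcf hg'
      rw [h0]
      rfl
end

section
/- Let k be a commutative ring and let M be an n×n matrix with entries in k. If the map k^n → k^n, v ↦ M·v, is injective, then det M is a non-zero-divisor in k: for every μ ∈ k, μ·det M = 0 implies μ = 0. -/
open Matrix Finset

private lemma snoc_injective_aux {n r : ℕ} {f : Fin r → Fin n} {c : Fin n}
    (hf : Function.Injective f) (hc : ∀ a, f a ≠ c) :
    Function.Injective (Fin.snoc f c : Fin (r + 1) → Fin n) := by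
  intro a b hab
  rcases Fin.eq_castSucc_or_eq_last a with ⟨a', rfl⟩ | rfl <;>
    rcases Fin.eq_castSucc_or_eq_last b with ⟨b', rfl⟩ | rfl <;>
    simp only [Fin.snoc_castSucc, Fin.snoc_last] at hab
  · exact congrArg Fin.castSucc (hf hab)
  · exact absurd hab (hc a')
  · exact absurd hab.symm (hc b')
  · rfl

/-- If an `n × n` matrix `M` over a commutative ring acts injectively on column
vectors, then its determinant is a non-zero-divisor: `μ * det M = 0` implies `μ = 0`. -/
theorem det_nonZeroDivisor_of_injective_mulVec
    {k : Type*} [CommRing k] {n : ℕ} (M : Matrix (Fin n) (Fin n) k)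
    (h : Function.Injective M.mulVec) :
    ∀ μ : k, μ * M.det = 0 → μ = 0 := by
  classical
  intro μ hμM
  by_contra hμ
  set P : ℕ → Prop := fun r => ∃ f g : Fin r → Fin n, Function.Injective f ∧
      Function.Injective g ∧ μ * (M.submatrix f g).det ≠ 0 with hPdef
  have hP0 : P 0 :=
    ⟨Fin.elim0, Fin.elim0, fun a => a.elim0, fun a => a.elim0, by simpa using hμ⟩
  set r := Nat.findGreatest P n with hrdef
  have hPr : P r := Nat.findGreatest_spec (Nat.zero_le n) hP0
  have hrn : r ≤ n := Nat.findGreatest_le n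
  have hPn : ¬ P n := by
    rintro ⟨f, g, hf, hg, hne⟩
    have hbf : Function.Bijective f := Finite.injective_iff_bijective.mp hf
    have hbg : Function.Bijective g := Finite.injective_iff_bijective.mp hg
    set e₁ : Equiv.Perm (Fin n) := Equiv.ofBijective f hbf
    set e₂ : Equiv.Perm (Fin n) := Equiv.ofBijective g hbg
    have h1 : M.submatrix f g = (M.submatrix id ⇑e₂).submatrix ⇑e₁ id := by
      rw [submatrix_submatrix]; rfl
    apply hne
    rw [h1, det_permute, det_permute']
    have : μ * ((Equiv.Perm.sign e₁ : ℤ) * ((Equiv.Perm.sign e₂ : ℤ) * M.det))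
        = ((Equiv.Perm.sign e₁ : ℤ) : k) * ((Equiv.Perm.sign e₂ : ℤ) : k) * (μ * M.det) := by
      ring
    rw [this, hμM, mul_zero]
  have hrlt : r < n := lt_of_le_of_ne hrn (fun e => hPn (e ▸ hPr))
  obtain ⟨f, g, hf, hg, hd⟩ := hPr
  -- find a column index outside the range of `g`
  have hgs : ¬ Function.Surjective g := by
    intro hs
    have := Fintype.card_le_of_surjective g hs
    simp only [Fintype.card_fin] at this
    omega
  obtain ⟨c, hc⟩ := not_forall.mp hgs
  have hc' : ∀ a, g a ≠ c := by
    intro a hac; exact hc ⟨a, hac⟩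
  set g' : Fin (r + 1) → Fin n := Fin.snoc g c with hg'def
  have hg' : Function.Injective g' := snoc_injective_aux hg hc'
  set coeff : Fin (r + 1) → k := fun i =>
    (-1 : k) ^ (r + (i : ℕ)) * μ * (M.submatrix f (g' ∘ i.succAbove)).det with hcoeff
  set v : Fin n → k := fun c' => ∑ i, if c' = g' i then coeff i else 0 with hv
  have hv1 : ∀ i, v (g' i) = coeff i := by
    intro i
    show (∑ i', if g' i = g' i' then coeff i' else 0) = coeff i
    rw [Finset.sum_eq_single i (fun j _ hj => if_neg (fun e => hj (hg' e).symm))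
      (fun hi => absurd (Finset.mem_univ i) hi)]
    rw [if_pos rfl]
  have hglast : g' ∘ Fin.castSucc = g := by
    funext i; simp [hg'def]
  have hvlast : v (g' (Fin.last r)) = μ * (M.submatrix f g).det := by
    rw [hv1, hcoeff]
    simp only [Fin.succAbove_last, Fin.val_last, hglast]
    have : (-1 : k) ^ (r + r) = 1 := Even.neg_one_pow ⟨r, rfl⟩
    rw [this, one_mul]
  -- the key vanishing computation
  have hMv : M.mulVec v = 0 := by
    funext j
    have step1 : M.mulVec v j = ∑ i, M j (g' i) * coeff i := by
      simp only [mulVec, dotProduct, hv, Finset.mul_sum, mul_ite, mul_zero]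
      rw [Finset.sum_comm]
      refine Finset.sum_congr rfl fun i _ => ?_
      rw [Finset.sum_ite_eq' Finset.univ (g' i) (fun c' => M j c' * coeff i)]
      simp
    set B : Matrix (Fin (r + 1)) (Fin (r + 1)) k := M.submatrix (Fin.snoc f j) g' with hB
    have step2 : M.mulVec v j = μ * B.det := by
      rw [step1, det_succ_row B (Fin.last r), Finset.mul_sum]
      refine Finset.sum_congr rfl fun i _ => ?_
      have h1 : B (Fin.last r) i = M j (g' i) := by
        simp [hB, Matrix.submatrix_apply]
      have h2 : B.submatrix (Fin.last r).succAbove i.succAbove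
          = M.submatrix f (g' ∘ i.succAbove) := by
        rw [hB, submatrix_submatrix, Fin.succAbove_last]
        funext a; simp
      rw [h1, h2, hcoeff, Fin.val_last]
      ring
    rw [step2]
    by_cases hj : ∃ i0, f i0 = j
    · obtain ⟨i0, rfl⟩ := hj
      have hrows : B (Fin.castSucc i0) = B (Fin.last r) := by
        funext a; simp [hB, Matrix.submatrix_apply]
      rw [det_zero_of_row_eq (Fin.castSucc_lt_last i0).ne hrows, mul_zero]
      rfl
    · push_neg at hj
      have hsnoc : Function.Injective (Fin.snoc f j : Fin (r + 1) → Fin n) :=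
        snoc_injective_aux hf hj
      by_contra hne
      exact Nat.findGreatest_is_greatest (Nat.lt_succ_self r) (by omega)
        ⟨Fin.snoc f j, g', hsnoc, hg', hne⟩
  have hv0 : v = 0 := by
    have : M.mulVec v = M.mulVec 0 := by rw [hMv, mulVec_zero]
    exact h this
  apply hd
  rw [← hvlast, hv0]
  rfl
end

section
/- Let k be a commutative ring, A a unital associative k-algebra which is free of finite rank as a k-module, and t : A → k a trace, i.e. a k-linear map satisfying t(ab) = t(ba) for all a, b ∈ A. Then the following are equivalent: (i) t is non-degenerate, i.e. the k-linear map ρ : A → Hom_k(A, k) defined by ρ(a)(x) = t(ax) is bijective; (ii) for every μ ∈ k and every a ∈ A, one has (t(ax) ∈ μ·k for all x ∈ A) if and only if a ∈ μ·A, i.e. a = μ·b for some b ∈ A. -/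
/-- Descent step: if `c` kills all `(r+1)`-minors of `N` and `N.mulVec` is injective,
then `c` kills all `r`-minors (when `r < card ι`). -/
lemma descent {ι : Type*} [Fintype ι] [DecidableEq ι] {k : Type*} [CommRing k]
    (N : Matrix ι ι k) (hinj : Function.Injective N.mulVec) {c : k} (r : ℕ)
    (hr : r < Fintype.card ι)
    (h : ∀ f g : Fin (r+1) → ι, c * (N.submatrix f g).det = 0)
    (f g : Fin r → ι) : c * (N.submatrix f g).det = 0 := by
  -- pick j₀ outside range of g
  obtain ⟨j₀, hj₀⟩ : ∃ j₀ : ι, ∀ s : Fin r, g s ≠ j₀ := by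
    by_contra hcon
    push_neg at hcon
    have hsurj : Function.Surjective g := fun j => (hcon j).imp (fun s hs => hs)
    have := Fintype.card_le_of_surjective g hsurj
    simp at this
    omega
  set γ : Fin (r+1) → ι := Fin.cons j₀ g with hγ
  have hγ0 : γ 0 = j₀ := rfl
  have hγs : ∀ p : Fin r, γ p.succ = g p := fun p => rfl
  set u : Fin (r+1) → k := fun s =>
    ((N.submatrix (Fin.cons j₀ f) γ).updateRow 0 (Pi.single s 1)).det with hu
  set v : ι → k := fun j => ∑ s : Fin (r+1), if γ s = j then c * u s else 0 with hv
  have hrow : ∀ (i : ι) (s : Fin (r+1)),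
      (N.submatrix (Fin.cons i f) γ).updateRow 0 (Pi.single s 1)
        = (N.submatrix (Fin.cons j₀ f) γ).updateRow 0 (Pi.single s 1) := by
    intro i s
    ext p q
    refine Fin.cases ?_ (fun p' => ?_) p <;> simp [Matrix.updateRow_apply]
  have hNv : N.mulVec v = 0 := by
    funext i
    have key : N.mulVec v i = c * (N.submatrix (Fin.cons i f) γ).det := by
      set B := N.submatrix (Fin.cons i f) γ with hB
      have hadj : ∀ s, u s = B.adjugate s 0 := by
        intro s
        rw [Matrix.adjugate_apply]
        exact congrArg Matrix.det (hrow i s).symm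
      calc N.mulVec v i = ∑ j, N i j * v j := by
            simp [Matrix.mulVec, dotProduct]
        _ = ∑ j, ∑ s : Fin (r+1), (if γ s = j then N i j * (c * u s) else 0) := by
            refine Finset.sum_congr rfl fun j _ => ?_
            rw [hv, Finset.mul_sum]
            refine Finset.sum_congr rfl fun s _ => ?_
            split <;> simp
        _ = ∑ s : Fin (r+1), ∑ j, (if γ s = j then N i j * (c * u s) else 0) :=
            Finset.sum_comm
        _ = ∑ s : Fin (r+1), N i (γ s) * (c * u s) := by
            refine Finset.sum_congr rfl fun s _ => ?_
            exact (Finset.sum_ite_eq Finset.univ (γ s) (fun j => N i j * (c * u s))).trans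
              (if_pos (Finset.mem_univ _))
        _ = c * ∑ s : Fin (r+1), B 0 s * B.adjugate s 0 := by
            rw [Finset.mul_sum]
            refine Finset.sum_congr rfl fun s _ => ?_
            rw [← hadj s]
            have : B 0 s = N i (γ s) := by simp [hB]
            rw [this]; ring
        _ = c * (B * B.adjugate) 0 0 := by rw [Matrix.mul_apply]
        _ = c * B.det := by rw [Matrix.mul_adjugate]; simp
    rw [key, h (Fin.cons i f) γ]
    rfl
  have hv0 : v = 0 := by
    apply hinj
    rw [hNv, Matrix.mulVec_zero]
  have hiff : ∀ s : Fin (r+1), (γ s = j₀) ↔ (s = 0) := by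
    intro s
    constructor
    · intro h1
      by_contra hs
      obtain ⟨p, rfl⟩ := Fin.eq_succ_of_ne_zero hs
      exact hj₀ p ((hγs p).symm.trans h1)
    · intro h2; subst h2; exact hγ0
  have hvj₀ : v j₀ = c * u 0 := by
    rw [hv]
    calc (∑ s : Fin (r+1), if γ s = j₀ then c * u s else 0)
        = ∑ s : Fin (r+1), if s = 0 then c * u s else 0 := by
          simp only [hiff]
      _ = c * u 0 := by
          rw [Finset.sum_ite_eq' Finset.univ (0 : Fin (r+1)) (fun s => c * u s)]
          simp
  have hu0 : u 0 = (N.submatrix f g).det := by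
    show ((N.submatrix (Fin.cons j₀ f) γ).updateRow 0 (Pi.single 0 1)).det
        = (N.submatrix f g).det
    rw [Matrix.det_succ_row_zero]
    rw [Finset.sum_eq_single 0]
    · simp only [Matrix.updateRow_self, Pi.single_eq_same, Fin.val_zero, pow_zero, one_mul,
        mul_one]
      congr 1
    · intro j _ hj
      simp [Matrix.updateRow_apply, Pi.single_apply]
      exact fun hh => absurd hh hj
    · intro hh; simp at hh
  have hfin := hvj₀
  rw [hv0] at hfin
  rw [hu0] at hfin
  simpa using hfin.symm

/-- McCoy: if `N.mulVec` is injective then `det N` is a non-zero-divisor. -/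
lemma mccoy {ι : Type*} [Fintype ι] [DecidableEq ι] {k : Type*} [CommRing k]
    (N : Matrix ι ι k) (hinj : Function.Injective N.mulVec) {c : k}
    (hc : c * N.det = 0) : c = 0 := by
  set n := Fintype.card ι with hn
  have start : ∀ f g : Fin n → ι, c * (N.submatrix f g).det = 0 := by
    intro f g
    by_cases hf : Function.Injective f
    · by_cases hg : Function.Injective g
      · have hfb : Function.Bijective f :=
          ⟨hf, (Fintype.bijective_iff_injective_and_card f).mpr ⟨hf, by simp [hn]⟩ |>.2⟩
        have hgb : Function.Bijective g :=
          ⟨hg, (Fintype.bijective_iff_injective_and_card g).mpr ⟨hg, by simp [hn]⟩ |>.2⟩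
        set e₁ := Equiv.ofBijective f hfb with he₁
        set e₂ := Equiv.ofBijective g hgb with he₂
        have hsub : N.submatrix f g
            = (N.submatrix e₂ e₂).submatrix (e₁.trans e₂.symm) id := by
          ext p q
          simp [he₁, he₂, Equiv.ofBijective_apply_symm_apply]
        have hperm := Matrix.det_permute ((e₁.trans e₂.symm : Equiv.Perm (Fin n)))
          (N.submatrix e₂ e₂)
        have hps : ((N.submatrix e₂ e₂).submatrix (e₁.trans e₂.symm) id).det
            = (((Equiv.Perm.sign (e₁.trans e₂.symm) : ℤˣ) : ℤ) : k) * N.det := by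
          rw [← Matrix.det_submatrix_equiv_self e₂ N]
          exact hperm
        rw [hsub, hps, mul_left_comm, hc, mul_zero]
      · obtain ⟨q₁, q₂, hq, hne⟩ : ∃ q₁ q₂, g q₁ = g q₂ ∧ q₁ ≠ q₂ := by
          simp only [Function.Injective] at hg
          push_neg at hg
          obtain ⟨a, b, h1, h2⟩ := hg
          exact ⟨a, b, h1, h2⟩
        rw [Matrix.det_zero_of_column_eq hne (fun p => by simp [hq]), mul_zero]
    · obtain ⟨p₁, p₂, hp, hne⟩ : ∃ p₁ p₂, f p₁ = f p₂ ∧ p₁ ≠ p₂ := by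
        simp only [Function.Injective] at hf
        push_neg at hf
        obtain ⟨a, b, h1, h2⟩ := hf
        exact ⟨a, b, h1, h2⟩
      rw [Matrix.det_zero_of_row_eq hne (by ext q; simp [hp]), mul_zero]
  have key : ∀ m : ℕ, ∀ f g : Fin (n - m) → ι, c * (N.submatrix f g).det = 0 := by
    intro m
    induction m with
    | zero => simpa using start
    | succ m ih =>
      rcases Nat.eq_zero_or_pos (n - m) with h0 | hpos
      · have : n - (m+1) = n - m := by omega
        rw [this]; exact ih
      · have h1 : n - (m+1) + 1 = n - m := by omega
        have h2 : n - (m+1) < n := by omega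
        intro f g
        exact descent N hinj (n - (m+1)) h2 (by rw [h1]; exact ih) f g
  have := key n (Fin.elim0 ∘ (Nat.sub_self n ▸ id)) (Fin.elim0 ∘ (Nat.sub_self n ▸ id))
  have hz : ∀ f g : Fin 0 → ι, c * (N.submatrix f g).det = 0 := by
    have h0 : n - n = 0 := Nat.sub_self n
    intro f g
    have := key n
    rw [h0] at this
    exact this f g
  simpa using hz Fin.elim0 Fin.elim0

/-- If `N` pulls back divisibility by every `μ`, then `N.mulVec` is bijective. -/
lemma matrix_key {ι : Type*} [Fintype ι] [DecidableEq ι] {k : Type*} [CommRing k]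
    (N : Matrix ι ι k)
    (H : ∀ (μ : k) (v : ι → k), (∀ i, ∃ c, N.mulVec v i = μ * c) → ∃ w, v = μ • w) :
    Function.Bijective N.mulVec := by
  have hker : ∀ v, N.mulVec v = 0 → v = 0 := by
    intro v hv
    obtain ⟨w, hw⟩ := H 0 v (fun i => ⟨0, by rw [hv]; simp⟩)
    simpa using hw
  have hinj : Function.Injective N.mulVec := by
    intro v₁ v₂ h12
    have hz : N.mulVec (v₁ - v₂) = 0 := by
      rw [Matrix.mulVec_sub, h12, sub_self]
    exact sub_eq_zero.mp (hker _ hz)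
  refine ⟨hinj, fun w => ?_⟩
  have h1 : N.mulVec (N.adjugate.mulVec w) = N.det • w := by
    rw [Matrix.mulVec_mulVec, Matrix.mul_adjugate, Matrix.smul_mulVec,
      Matrix.one_mulVec]
  obtain ⟨u, hu⟩ := H N.det (N.adjugate.mulVec w)
    (fun i => ⟨w i, by rw [h1]; simp⟩)
  have h2 : N.det • N.mulVec u = N.det • w := by
    rw [← Matrix.mulVec_smul, ← hu, h1]
  refine ⟨u, ?_⟩
  funext i
  have h3 : N.det * (N.mulVec u i - w i) = 0 := by
    have := congrFun h2 i
    simp only [Pi.smul_apply, smul_eq_mul] at this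
    rw [mul_sub, this, sub_self]
  have h4 : (N.mulVec u i - w i) * N.det = 0 := by rw [mul_comm]; exact h3
  exact sub_eq_zero.mp (mccoy N hinj h4)

/-- Lemma `caracnondeg`: for a trace `t` on a `k`-algebra `A` which is free of
finite rank as a `k`-module, the map `ρ : a ↦ t(a·−)` is bijective (i.e. `t` is
non-degenerate) iff for all `μ ∈ k` and `a ∈ A`, one has
`(∀ x, t(ax) ∈ μk) ↔ a ∈ μA`. -/
theorem trace_nondegenerate_iff_principal_ideal_characterization
    {k A : Type*} [CommRing k] [Ring A] [Algebra k A]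
    [Module.Free k A] [Module.Finite k A]
    (t : A →ₗ[k] k) (ht : ∀ a b : A, t (a * b) = t (b * a)) :
    Function.Bijective (fun a : A => t.comp (LinearMap.mulLeft k a)) ↔
      ∀ (μ : k) (a : A),
        (∀ x : A, ∃ c : k, t (a * x) = μ * c) ↔ (∃ b : A, a = μ • b) := by
  classical
  set f := fun a : A => t.comp (LinearMap.mulLeft k a) with hf
  have hfapp : ∀ (a x : A), f a x = t (a * x) := fun a x => rfl
  have hfsmul : ∀ (μ : k) (a : A), f (μ • a) = μ • f a := by
    intro μ a
    apply LinearMap.ext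
    intro x
    simp only [hfapp, LinearMap.smul_apply, smul_mul_assoc, map_smul]
  constructor
  · -- nondegenerate → characterization
    intro hbij μ a
    constructor
    · intro hdiv
      choose c hc using fun i => hdiv ((Module.Free.chooseBasis k A) i)
      set bA := Module.Free.chooseBasis k A with hbA
      set φ : A →ₗ[k] k := bA.constr k c with hφ
      have hfa : f a = μ • φ := by
        apply bA.ext
        intro i
        simp only [hfapp, LinearMap.smul_apply, hφ, Module.Basis.constr_basis, smul_eq_mul]
        exact hc i
      obtain ⟨a', ha'⟩ := hbij.2 φ
      refine ⟨a', hbij.1 ?_⟩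
      show f a = f (μ • a')
      rw [hfa, hfsmul, ha']
    · rintro ⟨b', rfl⟩ x
      exact ⟨t (b' * x), by rw [smul_mul_assoc, map_smul, smul_eq_mul]⟩
  · -- characterization → nondegenerate
    intro H
    set bA := Module.Free.chooseBasis k A with hbA
    set ι := Module.Free.ChooseBasisIndex k A
    set N : Matrix ι ι k := fun i j => t (bA j * bA i) with hN
    have hNa : ∀ (a : A) (i : ι), N.mulVec (bA.repr a) i = t (a * bA i) := by
      intro a i
      have hsum : a = ∑ j, bA.repr a j • bA j := (bA.sum_repr a).symm
      calc N.mulVec (bA.repr a) i = ∑ j, t (bA j * bA i) * bA.repr a j := by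
            simp [Matrix.mulVec, dotProduct, hN]
        _ = t (a * bA i) := by
            conv_rhs => rw [hsum]
            rw [Finset.sum_mul, map_sum]
            refine Finset.sum_congr rfl fun j _ => ?_
            rw [smul_mul_assoc, map_smul, smul_eq_mul, mul_comm]
    have HN : ∀ (μ : k) (v : ι → k),
        (∀ i, ∃ c, N.mulVec v i = μ * c) → ∃ w, v = μ • w := by
      intro μ v hdiv
      set a := ∑ i, v i • bA i with ha
      have hra : ⇑(bA.repr a) = v := bA.repr_sum_self v
      have hdivA : ∀ x : A, ∃ c, t (a * x) = μ * c := by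
        intro x
        choose ci hci using hdiv
        have hx : x = ∑ i, bA.repr x i • bA i := (bA.sum_repr x).symm
        refine ⟨∑ i, bA.repr x i * ci i, ?_⟩
        conv_lhs => rw [hx]
        rw [Finset.mul_sum, map_sum, Finset.mul_sum]
        refine Finset.sum_congr rfl fun i _ => ?_
        rw [mul_smul_comm, map_smul, smul_eq_mul]
        have : t (a * bA i) = μ * ci i := by rw [← hNa a i, hra]; exact hci i
        rw [this]; ring
      obtain ⟨b', hb'⟩ := (H μ a).mp hdivA
      refine ⟨bA.repr b', ?_⟩
      calc v = bA.repr a := hra.symm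
        _ = μ • ⇑(bA.repr b') := by rw [hb', map_smul]; simp
    have hmat := matrix_key N HN
    constructor
    · -- injective
      intro a₁ a₂ h12
      have hsub : f (a₁ - a₂) = 0 := by
        apply LinearMap.ext
        intro x
        simp only [hfapp, sub_mul, map_sub, LinearMap.zero_apply]
        have : f a₁ x = f a₂ x := by rw [h12]
        simp only [hfapp] at this
        rw [this, sub_self]
      have hdiv0 : ∀ x : A, ∃ c, t ((a₁ - a₂) * x) = 0 * c := by
        intro x
        refine ⟨0, ?_⟩
        have := congrArg (fun g : A →ₗ[k] k => g x) hsub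
        simp only [hfapp] at this
        simpa using this
      obtain ⟨b', hb'⟩ := ((H 0 (a₁ - a₂)).mp hdiv0)
      rw [zero_smul] at hb'
      exact sub_eq_zero.mp hb'
    · -- surjective
      intro φ
      obtain ⟨v, hv⟩ := hmat.2 (fun i => φ (bA i))
      refine ⟨∑ j, v j • bA j, ?_⟩
      apply bA.ext
      intro i
      have h1 : f (∑ j, v j • bA j) (bA i) = t ((∑ j, v j • bA j) * bA i) := rfl
      rw [h1, ← hNa (∑ j, v j • bA j) i, bA.repr_sum_self, hv]
end
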